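/- On the surface X = {(x,y,z) ∈ ℂ³ : x·z − y² + 1 = 0}, the quotient map to the orbit space of the additive ℂ-action t·(x,y,z) = (x, y+xt, z+2yt+xt²) separates orbits via the invariant x together with the sign of y on the locus x = 0: two points p = (x,y,z) and p' = (x',y',z') of X lie in the same orbit if and only if x = x' and, in case x = x' = 0, additionally y = y'. -/

import Mathlib

def actX (t : ℂ) (p : ℂ × ℂ × ℂ) : ℂ × ℂ × ℂ :=
  (p.1, p.2.1 + p.1 * t, p.2.2 + 2 * p.2.1 * t + p.1 * t ^ 2)

/-- On `X = {xz − y² + 1 = 0}` with the additive `ℂ`-action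
`t·(x,y,z) = (x, y+xt, z+2yt+xt²)`, two points lie in the same orbit if and only
if their `x`-coordinates agree and, in case the common `x`-coordinate is `0`,
their `y`-coordinates also agree. -/
theorem actX_orbit_characterization :
    ∀ p p' : ℂ × ℂ × ℂ,
      p.1 * p.2.2 - p.2.1 ^ 2 + 1 = 0 → p'.1 * p'.2.2 - p'.2.1 ^ 2 + 1 = 0 →
      ((∃ t : ℂ, actX t p = p') ↔ (p.1 = p'.1 ∧ (p.1 = 0 → p.2.1 = p'.2.1))) := by
  rintro ⟨x, y, z⟩ ⟨x', y', z'⟩ h h'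
  simp only [actX, Prod.mk.injEq] at *
  constructor
  · rintro ⟨t, rfl, rfl, rfl⟩
    exact ⟨rfl, fun hx => by simp [hx]⟩
  · rintro ⟨rfl, hy⟩
    by_cases hx : x = 0
    · subst hx
      have hyy : y = y' := hy rfl
      subst hyy
      have hy0 : y ≠ 0 := by
        intro h0; rw [h0] at h; simp at h
      exact ⟨(z' - z) / (2 * y), rfl, by ring, by field_simp; ring⟩
    · have hu : x * ((y' - y) / x) = y' - y := by field_simp
      refine ⟨(y' - y) / x, rfl, by linear_combination hu, ?_⟩
      have hmul : x * (z + 2 * y * ((y' - y) / x) + x * ((y' - y) / x) ^ 2)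
          = x * z' := by
        linear_combination h - h' + 2 * y * hu + (x * ((y' - y) / x) + y' - y) * hu
      exact mul_left_cancel₀ hx hmul
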